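/- Let V be a finite vertex type and E : V → V → Prop an edge relation. For every edge, i.e., every pair of vertices u, v with E u v, there exists a prime path of (V, E) in which u and v occur at consecutive positions, with u immediately followed by v. Consequently prime path coverage subsumes edge (branch) coverage. -/

import Mathlib

/-- A (directed) path in the graph `(V, E)`: a nonempty list of vertices in which
consecutive vertices are related by the edge relation `E`. -/
def IsPath {V : Type*} (E : V → V → Prop) (l : List V) : Prop :=
  l ≠ [] ∧ l.Chain' E

/-- A simple path: a path in which no vertex occurs more than once,
except that the first and last vertices may coincide. -/
def IsSimplePath {V : Type*} (E : V → V → Prop) (l : List V) : Prop :=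
  IsPath E l ∧ l.dropLast.Nodup ∧ l.tail.Nodup

/-- A closed path: it has at least two vertices and its first and last vertices coincide. -/
def IsClosedPath {V : Type*} (l : List V) : Prop :=
  2 ≤ l.length ∧ l.head? = l.getLast?

/-- A prime path: a maximal simple path, i.e. a simple path that is not a proper
subpath (contiguous sublist) of any simple path. -/
def IsPrimePath {V : Type*} (E : V → V → Prop) (l : List V) : Prop :=
  IsSimplePath E l ∧ ∀ q : List V, IsSimplePath E q → l <:+: q → l = q

/-- In a finite graph, every edge `E u v` occurs (as the contiguous block
`[u, v]`) on some prime path (prime path coverage subsumes edge coverage). -/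
theorem edge_mem_primePath {V : Type*} [Fintype V] (E : V → V → Prop)
    (u v : V) (huv : E u v) :
    ∃ p : List V, IsPrimePath E p ∧ [u, v] <:+: p := by
  have hlen : ∀ l : List V, IsSimplePath E l → l.length ≤ Fintype.card V + 1 := by
    intro l hl
    have h1 : l.dropLast.length ≤ Fintype.card V := List.Nodup.length_le_card hl.2.1
    have h2 : l.dropLast.length = l.length - 1 := List.length_dropLast
    omega
  have aux : ∀ n (l : List V), IsSimplePath E l → [u, v] <:+: l →
      Fintype.card V + 2 - l.length ≤ n → ∃ p, IsPrimePath E p ∧ [u, v] <:+: p := by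
    intro n
    induction n with
    | zero =>
      intro l hl _ hle
      have := hlen l hl
      omega
    | succ n ih =>
      intro l hl hinf hle
      by_cases hmax : ∀ q : List V, IsSimplePath E q → l <:+: q → l = q
      · exact ⟨l, ⟨hl, hmax⟩, hinf⟩
      · push_neg at hmax
        obtain ⟨q, hq, hlq, hne⟩ := hmax
        have hlt : l.length < q.length := by
          rcases Nat.lt_or_ge l.length q.length with h | h
          · exact h
          · exact absurd (hlq.eq_of_length_le h) hne
        exact ih q hq (hinf.trans hlq) (by omega)
  have hsimp : IsSimplePath E [u, v] := by
    refine ⟨⟨by simp, ?_⟩, by simp, by simp⟩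
    simp [List.Chain', List.isChain_cons_cons, huv]
  exact aux (Fintype.card V + 2) [u, v] hsimp (List.infix_refl _) (by omega)
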